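/- Let n ≥ 1, let p > 1 be a real number, let α > 0, and let d ∈ ℝ^n have strictly positive entries. Define q_j = d_j^{-1/(p-1)} for j = 1,…,n and define m*_i = α^{1/p} · q_i / (∑_{j=1}^n q_j)^{1/p}. Assume α is sufficiently small, namely α^{1/p} · q_i ≤ (∑_{j=1}^n q_j)^{1/p} for every i. Then m* is an optimal solution of the problem: maximize ∑_{i=1}^n m_i over all m ∈ ℝ^n satisfying 0 ≤ m_i ≤ 1 for all i and ∑_{i=1}^n d_i m_i^p ≤ α. That is, m* satisfies 0 ≤ m*_i ≤ 1 for all i, ∑_{i=1}^n d_i (m*_i)^p ≤ α, and ∑_{i=1}^n m_i ≤ ∑_{i=1}^n m*_i for every m ∈ ℝ^n with 0 ≤ m_i ≤ 1 for all i and ∑_{i=1}^n d_i m_i^p ≤ α. -/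

import Mathlib

open Finset

/-- Tangent-line inequality for `t ↦ t^p` at `s`:
for `0 < s`, `0 ≤ t`, `1 < p` we have `t - s ≤ (t^p - s^p) * s^(1-p) / p`. -/
lemma tangent_line_rpow {p : ℝ} (hp : 1 < p) {s t : ℝ} (hs : 0 < s) (ht : 0 ≤ t) :
    t - s ≤ (t ^ p - s ^ p) * s ^ (1 - p) / p := by
  have hp0 : (0:ℝ) < p := lt_trans one_pos hp
  have hz : -1 ≤ t / s - 1 := by
    have : 0 ≤ t / s := div_nonneg ht hs.le
    linarith
  have h1 : 1 + p * (t / s - 1) ≤ (1 + (t / s - 1)) ^ p :=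
    one_add_mul_self_le_rpow_one_add hz hp.le
  have h1' : 1 + p * (t / s - 1) ≤ (t / s) ^ p := by
    simpa using h1
  have hdiv : (t / s) ^ p = t ^ p / s ^ p := Real.div_rpow ht hs.le p
  set B := s ^ (p - 1) with hBdef
  have hB : 0 < B := Real.rpow_pos_of_pos hs _
  have hA : s ^ p = B * s := by
    rw [hBdef, show p = p - 1 + 1 by ring, Real.rpow_add hs, Real.rpow_one]
    ring_nf
  have hApos : 0 < s ^ p := Real.rpow_pos_of_pos hs _
  have h2 : (1 + p * (t / s - 1)) * s ^ p ≤ t ^ p := by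
    have := (le_div_iff₀ hApos).mp (h1'.trans_eq hdiv)
    linarith
  have hts : t / s * (s ^ p) = t * B := by
    rw [hA]
    field_simp
  have h3 : p * (t * B - s * B) ≤ t ^ p - s ^ p := by
    nlinarith [h2, hts, hA]
  have hinv : s ^ (1 - p) = B⁻¹ := by
    rw [hBdef, show (1 : ℝ) - p = -(p - 1) by ring, Real.rpow_neg hs.le]
  rw [hinv, le_div_iff₀ hp0, ← div_eq_mul_inv, le_div_iff₀ hB]
  nlinarith [h3]

theorem optimal_mask_closed_form
    (n : ℕ) (hn : 1 ≤ n) (p α : ℝ) (hp : 1 < p) (hα : 0 < α)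
    (d : Fin n → ℝ) (hd : ∀ i, 0 < d i)
    (q : Fin n → ℝ) (hq : ∀ j, q j = (d j) ^ (-(1 / (p - 1))))
    (mstar : Fin n → ℝ)
    (hmstar : ∀ i, mstar i = α ^ (1 / p) * q i / (∑ j, q j) ^ (1 / p))
    (hsmall : ∀ i, α ^ (1 / p) * q i ≤ (∑ j, q j) ^ (1 / p)) :
    (∀ i, 0 ≤ mstar i ∧ mstar i ≤ 1) ∧
      (∑ i, d i * mstar i ^ p ≤ α) ∧
      (∀ m : Fin n → ℝ, (∀ i, 0 ≤ m i ∧ m i ≤ 1) →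
        (∑ i, d i * m i ^ p ≤ α) → ∑ i, m i ≤ ∑ i, mstar i) := by
  have hp0 : (0:ℝ) < p := lt_trans one_pos hp
  have hp1 : (0:ℝ) < p - 1 := sub_pos.2 hp
  have hqpos : ∀ j, 0 < q j := fun j => by
    rw [hq j]; exact Real.rpow_pos_of_pos (hd j) _
  have hne : (Finset.univ : Finset (Fin n)).Nonempty := ⟨⟨0, hn⟩, mem_univ _⟩
  set Q := ∑ j, q j with hQdef
  have hQ : 0 < Q := Finset.sum_pos (fun j _ => hqpos j) hne
  have hQp : 0 < Q ^ (1 / p) := Real.rpow_pos_of_pos hQ _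
  set c := (α / Q) ^ (1 / p) with hcdef
  have hc : 0 < c := Real.rpow_pos_of_pos (div_pos hα hQ) _
  have hms : ∀ i, mstar i = c * q i := by
    intro i
    rw [hmstar i, hcdef, Real.div_rpow hα.le hQ.le]
    field_simp
  have hmspos : ∀ i, 0 < mstar i := fun i => by
    rw [hms i]; exact mul_pos hc (hqpos i)
  -- power of c
  have hcp : c ^ p = α / Q := by
    rw [hcdef, ← Real.rpow_mul (div_pos hα hQ).le, one_div_mul_cancel hp0.ne',
      Real.rpow_one]
  -- d i * q i ^ p = q i
  have hdq : ∀ i, d i * q i ^ p = q i := by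
    intro i
    have he : (1:ℝ) + -(1 / (p - 1)) * p = -(1 / (p - 1)) := by
      field_simp
      ring
    rw [hq i, ← Real.rpow_mul (hd i).le]
    nth_rewrite 1 [← Real.rpow_one (d i)]
    rw [← Real.rpow_add (hd i), he]
  -- q i ^ (1 - p) = d i
  have hq1p : ∀ i, q i ^ (1 - p) = d i := by
    intro i
    rw [hq i, ← Real.rpow_mul (hd i).le]
    rw [show -(1 / (p - 1)) * (1 - p) = 1 by field_simp; ring, Real.rpow_one]
  -- per-coordinate distortion
  have hdist : ∀ i, d i * mstar i ^ p = α / Q * q i := by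
    intro i
    rw [hms i, Real.mul_rpow hc.le (hqpos i).le, hcp]
    linear_combination (α / Q) * hdq i
  have hsum : ∑ i, d i * mstar i ^ p = α := by
    calc ∑ i, d i * mstar i ^ p = ∑ i, α / Q * q i := by
          exact Finset.sum_congr rfl fun i _ => hdist i
      _ = α / Q * Q := by rw [← Finset.mul_sum]
      _ = α := div_mul_cancel₀ α hQ.ne'
  refine ⟨fun i => ⟨(hmspos i).le, ?_⟩, hsum.le, ?_⟩
  · rw [hmstar i, div_le_one hQp]
    exact hsmall i
  · intro m hm hmd
    have key : ∀ i, m i - mstar i ≤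
        (m i ^ p - mstar i ^ p) * (mstar i) ^ (1 - p) / p :=
      fun i => tangent_line_rpow hp (hmspos i) (hm i).1
    have hterm : ∀ i, (m i ^ p - mstar i ^ p) * (mstar i) ^ (1 - p) / p =
        (d i * m i ^ p - d i * mstar i ^ p) * (c ^ (1 - p) / p) := by
      intro i
      have h1 : (mstar i) ^ (1 - p) = c ^ (1 - p) * d i := by
        rw [hms i, Real.mul_rpow hc.le (hqpos i).le, hq1p i]
      rw [h1]; ring
    have hsum2 : ∑ i, (m i - mstar i) ≤
        ∑ i, (d i * m i ^ p - d i * mstar i ^ p) * (c ^ (1 - p) / p) := by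
      refine Finset.sum_le_sum fun i _ => ?_
      rw [← hterm i]; exact key i
    have hc1p : 0 < c ^ (1 - p) := Real.rpow_pos_of_pos hc _
    have hrhs : ∑ i, (d i * m i ^ p - d i * mstar i ^ p) * (c ^ (1 - p) / p) =
        (∑ i, d i * m i ^ p - α) * (c ^ (1 - p) / p) := by
      rw [← Finset.sum_mul, Finset.sum_sub_distrib, hsum]
    have hnonpos : (∑ i, d i * m i ^ p - α) * (c ^ (1 - p) / p) ≤ 0 :=
      mul_nonpos_of_nonpos_of_nonneg (by linarith) (by positivity)
    have := hsum2.trans (hrhs ▸ hnonpos)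
    rw [Finset.sum_sub_distrib] at this
    linarith
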